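/- In a polyhedral normed space, a framework (G,p) is locally rigid if and only if it is continuously rigid. -/
import Mathlib

open Set

private lemma aux_seg {X : Type*} [NormedAddCommGroup X] [NormedSpace ℝ X]
    (S : Finset (X →L[ℝ] ℝ)) (hS : S.Nonempty)
    (hnorm : ∀ x : X, ‖x‖ = S.sup' hS fun f => |f x|)
    (d d' : X) (hm : 0 < ‖d‖) (hdd' : ‖d'‖ = ‖d‖)
    (hc : ∀ f ∈ S, ‖f‖ * ‖d' - d‖ < (if |f d| < ‖d‖ then ‖d‖ - |f d| else ‖d‖))
    (t : ℝ) (ht0 : 0 ≤ t) (ht1 : t ≤ 1) :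
    ‖d + t • (d' - d)‖ = ‖d‖ := by
  obtain ⟨j, hj, hjeq⟩ := S.exists_mem_eq_sup' hS (fun f => |f d'|)
  have hjd' : |j d'| = ‖d‖ := by
    rw [hnorm d', hjeq] at hdd'; exact hdd'
  have hjb : |j (d' - d)| ≤ ‖j‖ * ‖d' - d‖ := by
    simpa [Real.norm_eq_abs] using j.le_opNorm (d' - d)
  have hja : |j d| = ‖d‖ := by
    by_contra h
    have hle : |j d| ≤ ‖d‖ := by
      rw [hnorm d]; exact Finset.le_sup' (fun f => |f d|) hj
    have hlt : |j d| < ‖d‖ := lt_of_le_of_ne hle h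
    have hcj := hc j hj
    rw [if_pos hlt] at hcj
    have hsplit : j d' = j d + j (d' - d) := by rw [map_sub]; ring
    have : |j d'| < ‖d‖ := by
      calc |j d'| ≤ |j d| + |j (d' - d)| := by rw [hsplit]; exact abs_add_le _ _
        _ ≤ |j d| + ‖j‖ * ‖d' - d‖ := by linarith
        _ < ‖d‖ := by linarith
    linarith [hjd']
  have hcj := hc j hj
  rw [if_neg (by rw [hja]; exact lt_irrefl _)] at hcj
  have hsign : j d' = j d := by
    have hdiff : |j d' - j d| < ‖d‖ := by
      have h1 : j d' - j d = j (d' - d) := (map_sub j d' d).symm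
      rw [h1]; exact lt_of_le_of_lt hjb hcj
    rcases (abs_eq hm.le).mp hja with h | h
    · have h1 : 0 < j d' := by
        rw [h] at hdiff; rcases abs_lt.mp hdiff with ⟨h2, _⟩; linarith
      rcases (abs_eq hm.le).mp hjd' with h2 | h2
      · rw [h, h2]
      · rw [h2] at h1; linarith
    · have h1 : j d' < 0 := by
        rw [h] at hdiff; rcases abs_lt.mp hdiff with ⟨_, h2⟩; linarith
      rcases (abs_eq hm.le).mp hjd' with h2 | h2
      · rw [h2] at h1; linarith
      · rw [h, h2]
  have hlin : j (d + t • (d' - d)) = j d := by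
    rw [map_add, map_smul, map_sub, hsign]; simp
  apply le_antisymm
  · have hseg : d + t • (d' - d) = (1 - t) • d + t • d' := by module
    rw [hseg]
    calc ‖(1 - t) • d + t • d'‖ ≤ ‖(1 - t) • d‖ + ‖t • d'‖ := norm_add_le _ _
      _ = (1 - t) * ‖d‖ + t * ‖d'‖ := by
          rw [norm_smul, norm_smul, Real.norm_eq_abs, Real.norm_eq_abs,
            abs_of_nonneg (by linarith), abs_of_nonneg ht0]
      _ = ‖d‖ := by rw [hdd']; ring
  · calc ‖d‖ = |j (d + t • (d' - d))| := by rw [hlin, hja]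
      _ ≤ _ := by rw [hnorm]; exact Finset.le_sup' (fun f => |f (d + t • (d' - d))|) hj

private lemma aux_cont {V X : Type*} [Fintype V] [NormedAddCommGroup X]
    (γ : ℝ → V → X) (hγc : ContinuousOn γ (Set.Icc 0 1))
    (ε : ℝ) (hε : 0 < ε) (t : ℝ) (ht : t ∈ Set.Icc (0:ℝ) 1) :
    ∃ δ > 0, ∀ t' ∈ Set.Icc (0:ℝ) 1, |t' - t| < δ →
      ∀ v : V, ‖γ t' v - γ t v‖ < ε := by
  have h1 : Filter.Tendsto γ (nhdsWithin t (Set.Icc 0 1)) (nhds (γ t)) := hγc t ht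
  have h2 : ∀ᶠ t' in nhdsWithin t (Set.Icc 0 1), dist (γ t') (γ t) < ε :=
    Metric.tendsto_nhds.mp h1 ε hε
  obtain ⟨δ, hδ, h3⟩ := Metric.mem_nhdsWithin_iff.mp h2
  refine ⟨δ, hδ, fun t' ht' hlt v => ?_⟩
  have : dist (γ t') (γ t) < ε :=
    h3 ⟨by rwa [Metric.mem_ball, Real.dist_eq], ht'⟩
  calc ‖γ t' v - γ t v‖ = dist (γ t' v) (γ t v) := (dist_eq_norm _ _).symm
    _ ≤ dist (γ t') (γ t) := dist_le_pi_dist _ _ v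
    _ < ε := this

/-- In a polyhedral normed space (the norm is the maximum of finitely many `|fᵢ(x)|` for
linear functionals `fᵢ`), a framework `(G,p)` is locally rigid (every nearby equivalent
placement is congruent to `p` via an isometry of `X`) if and only if it is continuously
rigid (every continuous flex starting at `p` stays congruent to `p`). -/
theorem stmt14 {V X : Type*} [Fintype V] [NormedAddCommGroup X] [NormedSpace ℝ X]
    [FiniteDimensional ℝ X]
    (S : Finset (X →L[ℝ] ℝ)) (hS : S.Nonempty)
    (hnorm : ∀ x : X, ‖x‖ = S.sup' hS fun f => |f x|)
    (E : Finset (V × V)) (p : V → X) :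
    (∃ ε > (0 : ℝ), ∀ q : V → X,
        (∀ e ∈ E, ‖q e.1 - q e.2‖ = ‖p e.1 - p e.2‖) →
        (∀ v : V, ‖q v - p v‖ < ε) →
        ∃ g : X ≃ᵢ X, ∀ v : V, g (p v) = q v)
    ↔ (∀ γ : ℝ → V → X, ContinuousOn γ (Set.Icc 0 1) → γ 0 = p →
        (∀ t ∈ Set.Icc (0 : ℝ) 1, ∀ e ∈ E, ‖γ t e.1 - γ t e.2‖ = ‖p e.1 - p e.2‖) →
        ∀ t ∈ Set.Icc (0 : ℝ) 1, ∃ g : X ≃ᵢ X, ∀ v : V, g (p v) = γ t v) := by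
  constructor
  · -- local rigidity → continuous rigidity
    rintro ⟨ε, hε, hloc⟩ γ hγc hγ0 hflex
    set Cong : ℝ → Prop := fun t => ∃ g : X ≃ᵢ X, ∀ v : V, g (p v) = γ t v with hCongdef
    have hCong0 : Cong 0 := ⟨IsometryEquiv.refl X, fun v => by rw [hγ0]; rfl⟩
    -- congruence transfers between nearby times
    have key : ∀ t ∈ Icc (0:ℝ) 1, ∀ t' ∈ Icc (0:ℝ) 1,
        (∀ v, ‖γ t v - γ t' v‖ < ε) → Cong t' → Cong t := by
      rintro t ht t' ht' hnear ⟨g, hg⟩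
      set q : V → X := fun v => g.symm (γ t v) with hq
      have hpg : ∀ v, g.symm (γ t' v) = p v := fun v => by
        rw [← hg v, g.symm_apply_apply]
      have hqE : ∀ e ∈ E, ‖q e.1 - q e.2‖ = ‖p e.1 - p e.2‖ := by
        intro e he
        have : ‖q e.1 - q e.2‖ = ‖γ t e.1 - γ t e.2‖ := by
          rw [← dist_eq_norm, ← dist_eq_norm, hq]
          exact g.symm.isometry.dist_eq _ _
        rw [this]; exact hflex t ht e he
      have hqnear : ∀ v, ‖q v - p v‖ < ε := by
        intro v
        have : ‖q v - p v‖ = ‖γ t v - γ t' v‖ := by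
          rw [← hpg v, ← dist_eq_norm, ← dist_eq_norm, hq]
          exact g.symm.isometry.dist_eq _ _
        rw [this]; exact hnear v
      obtain ⟨h, hh⟩ := hloc q hqE hqnear
      exact ⟨h.trans g, fun v => by
        simp only [IsometryEquiv.trans_apply, hh v, hq, g.apply_symm_apply]⟩
    -- the set of "locally all-congruent" times and its complement are open
    set u : Set ℝ := {t | ∃ δ > 0, ∀ t' ∈ Icc (0:ℝ) 1, |t' - t| < δ → Cong t'} with hudef
    set w : Set ℝ := {t | ∃ δ > 0, ∀ t' ∈ Icc (0:ℝ) 1, |t' - t| < δ → ¬ Cong t'} with hwdef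
    have hopen : ∀ (P : ℝ → Prop),
        IsOpen {t : ℝ | ∃ δ > 0, ∀ t' ∈ Icc (0:ℝ) 1, |t' - t| < δ → P t'} := by
      intro P
      rw [Metric.isOpen_iff]
      rintro t ⟨δ, hδ, hP⟩
      refine ⟨δ / 2, by linarith, fun t₁ ht₁ => ?_⟩
      rw [Metric.mem_ball, Real.dist_eq] at ht₁
      refine ⟨δ / 2, by linarith, fun t' ht' hlt => hP t' ht' ?_⟩
      have : |t' - t| ≤ |t' - t₁| + |t₁ - t| := abs_sub_le _ _ _
      linarith
    have hcover : Icc (0:ℝ) 1 ⊆ u ∪ w := by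
      intro t ht
      by_cases hC : Cong t
      · left
        obtain ⟨δ, hδ, hnear⟩ := aux_cont γ hγc ε hε t ht
        exact ⟨δ, hδ, fun t' ht' hlt => key t' ht' t ht (hnear t' ht' hlt) hC⟩
      · right
        obtain ⟨δ, hδ, hnear⟩ := aux_cont γ hγc ε hε t ht
        refine ⟨δ, hδ, fun t' ht' hlt hC' => hC ?_⟩
        exact key t ht t' ht' (fun v => by
          rw [norm_sub_rev]; exact hnear t' ht' hlt v) hC'
    have hdisj : Icc (0:ℝ) 1 ∩ (u ∩ w) = ∅ := by
      rw [eq_empty_iff_forall_notMem]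
      rintro t ⟨ht, htu, htw⟩
      simp only [hudef, hwdef, mem_setOf_eq] at htu htw
      obtain ⟨δ₁, hδ₁, h₁⟩ := htu
      obtain ⟨δ₂, hδ₂, h₂⟩ := htw
      exact h₂ t ht (by simp [hδ₂]) (h₁ t ht (by simp [hδ₁]))
    rcases isPreconnected_iff_subset_of_disjoint.mp isPreconnected_Icc u w
        (hopen _) (hopen _) hcover hdisj with hsub | hsub
    · intro t ht
      obtain ⟨δ, hδ, hP⟩ := hsub ht
      exact hP t ht (by simp [hδ])
    · exfalso
      have h0 : (0:ℝ) ∈ Icc (0:ℝ) 1 := by norm_num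
      obtain ⟨δ, hδ, hP⟩ := hsub h0
      exact hP 0 h0 (by simp [hδ]) hCong0
  · -- continuous rigidity → local rigidity
    intro hCR
    -- threshold per edge/functional pair
    set C : (V × V) × (X →L[ℝ] ℝ) → ℝ := fun ef =>
      if |ef.2 (p ef.1.1 - p ef.1.2)| < ‖p ef.1.1 - p ef.1.2‖ then
        ‖p ef.1.1 - p ef.1.2‖ - |ef.2 (p ef.1.1 - p ef.1.2)|
      else ‖p ef.1.1 - p ef.1.2‖ with hCdef
    set Δ : (V × V) × (X →L[ℝ] ℝ) → ℝ := fun ef =>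
      if ‖p ef.1.1 - p ef.1.2‖ = 0 then 1 else C ef / (4 * (‖ef.2‖ + 1)) with hΔdef
    set T : Finset ℝ := insert 1 ((E ×ˢ S).image Δ) with hTdef
    have hTne : T.Nonempty := ⟨1, Finset.mem_insert_self _ _⟩
    set ε : ℝ := T.min' hTne with hεdef
    have hCpos : ∀ ef ∈ E ×ˢ S, ‖p ef.1.1 - p ef.1.2‖ ≠ 0 → 0 < C ef := by
      intro ef _ hne
      have hmpos : 0 < ‖p ef.1.1 - p ef.1.2‖ :=
        lt_of_le_of_ne (norm_nonneg _) (Ne.symm hne)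
      rw [hCdef]
      dsimp only
      split
      · linarith [‹|ef.2 (p ef.1.1 - p ef.1.2)| < ‖p ef.1.1 - p ef.1.2‖›]
      · exact hmpos
    have hε : 0 < ε := by
      have hmem := T.min'_mem hTne
      rw [← hεdef] at hmem
      rw [hTdef] at hmem
      rcases Finset.mem_insert.mp hmem with h | h
      · rw [h]; norm_num
      · obtain ⟨ef, hef, hΔ⟩ := Finset.mem_image.mp h
        rw [← hΔ, hΔdef]
        dsimp only
        split
        · norm_num
        · have := hCpos ef hef (by assumption)
          positivity
    refine ⟨ε, hε, fun q hqE hqnear => ?_⟩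
    -- straight-line flex
    set γ : ℝ → V → X := fun t v => p v + t • (q v - p v) with hγdef
    have hγc : ContinuousOn γ (Icc 0 1) := by
      apply Continuous.continuousOn
      apply continuous_pi
      intro v
      exact continuous_const.add (continuous_id.smul continuous_const)
    have hγ0 : γ 0 = p := by funext v; simp [hγdef]
    have hflex : ∀ t ∈ Icc (0:ℝ) 1, ∀ e ∈ E,
        ‖γ t e.1 - γ t e.2‖ = ‖p e.1 - p e.2‖ := by
      intro t ht e he
      set d : X := p e.1 - p e.2 with hd
      set d' : X := q e.1 - q e.2 with hd'
      have hseg : γ t e.1 - γ t e.2 = d + t • (d' - d) := by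
        simp only [hγdef, hd, hd']
        module
      rw [hseg]
      by_cases hm0 : ‖d‖ = 0
      · have hdz : d = 0 := norm_eq_zero.mp hm0
        have hd'z : d' = 0 := norm_eq_zero.mp (by rw [hqE e he]; exact hm0)
        rw [hdz, hd'z]; simp
      · have hm : 0 < ‖d‖ := lt_of_le_of_ne (norm_nonneg _) (Ne.symm hm0)
        refine aux_seg S hS hnorm d d' hm (hqE e he) ?_ t ht.1 ht.2
        intro f hf
        have hef : (e, f) ∈ E ×ˢ S := Finset.mem_product.mpr ⟨he, hf⟩
        have hΔval : Δ (e, f) = C (e, f) / (4 * (‖f‖ + 1)) := by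
          rw [hΔdef]; dsimp only; rw [if_neg hm0]
        have hεle : ε ≤ C (e, f) / (4 * (‖f‖ + 1)) := by
          rw [← hΔval]
          exact T.min'_le _ (Finset.mem_insert_of_mem (Finset.mem_image_of_mem Δ hef))
        have hCp : 0 < C (e, f) := hCpos (e, f) hef hm0
        have hεC : ε * (4 * (‖f‖ + 1)) ≤ C (e, f) := by
          rw [← le_div_iff₀ (by positivity)]
          exact hεle
        have hdd : ‖d' - d‖ < 2 * ε := by
          have : d' - d = (q e.1 - p e.1) - (q e.2 - p e.2) := by
            rw [hd, hd']; abel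
          rw [this]
          calc ‖(q e.1 - p e.1) - (q e.2 - p e.2)‖
              ≤ ‖q e.1 - p e.1‖ + ‖q e.2 - p e.2‖ := norm_sub_le _ _
            _ < 2 * ε := by linarith [hqnear e.1, hqnear e.2]
        have hCeq : C (e, f) = if |f d| < ‖d‖ then ‖d‖ - |f d| else ‖d‖ := by
          rw [hCdef]
        rw [← hCeq]
        nlinarith [mul_nonneg (norm_nonneg f)
          (by linarith : (0:ℝ) ≤ 2 * ε - ‖d' - d‖), norm_nonneg f]
    obtain ⟨g, hg⟩ := hCR γ hγc hγ0 hflex 1 (by norm_num)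
    exact ⟨g, fun v => by rw [hg v]; simp [hγdef]⟩
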